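/- arXiv:2111.09396 — 2 statements merged into one kernel-verified Lean document; each statement's English description precedes it below -/
import Mathlib

section
/- Let Q ∈ ℝ^{n×n} be symmetric positive definite, A ∈ ℝ^{n×n}, B ∈ ℝ^{n×m}, R ∈ ℝ^{m×m} symmetric positive definite, ū ∈ ℝ^m, Ξ ∈ ℝ^{n×n} symmetric positive semidefinite, and ξ̄ ∈ ℝ^n. Suppose there exist scalars α, β, λ ≥ 0 such that −E − αF − βS − λT ⪰ 0, where E = [[AᵀQ+QA, 0, QB],[0, 0, 0],[BᵀQ, 0, 0]], F = [[Q, 0, 0],[0, −1, 0],[0, 0, 0]], S = [[0, 0, 0],[0, 1−ūᵀRū, ūᵀR],[0, Rū, −R]], and T = [[−Ξ, Ξξ̄, 0],[ξ̄ᵀΞ, 1−ξ̄ᵀΞξ̄, 0],[0, 0, 0]]. Then for every ζ ∈ ℝ^n and u ∈ ℝ^m satisfying ζᵀQζ ≥ 1, (u−ū)ᵀR(u−ū) ≤ 1, and (ζ−ξ̄)ᵀΞ(ζ−ξ̄) ≤ 1, one has 2ζᵀQ(Aζ + Bu) ≤ 0. -/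
open Matrix

/-- 3×3 block matrix. -/
def blk3 {α β γ : Type*} (M11 : Matrix α α ℝ) (M12 : Matrix α β ℝ) (M13 : Matrix α γ ℝ)
    (M21 : Matrix β α ℝ) (M22 : Matrix β β ℝ) (M23 : Matrix β γ ℝ)
    (M31 : Matrix γ α ℝ) (M32 : Matrix γ β ℝ) (M33 : Matrix γ γ ℝ) :
    Matrix (α ⊕ (β ⊕ γ)) (α ⊕ (β ⊕ γ)) ℝ :=
  Matrix.fromBlocks M11 (Matrix.of fun i j => Sum.elim (M12 i) (M13 i) j)
    (Matrix.of fun i j => Sum.elim (fun b => M21 b j) (fun c => M31 c j) i)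
    (Matrix.fromBlocks M22 M23 M32 M33)

/-- 1×1 matrix with entry `c`. -/
def sc (c : ℝ) : Matrix (Fin 1) (Fin 1) ℝ := Matrix.of fun _ _ => c

/-- column matrix of a vector. -/
def colV {α : Type*} (v : α → ℝ) : Matrix α (Fin 1) ℝ := Matrix.of fun i _ => v i

/-- row matrix of a vector. -/
def rowV {α : Type*} (v : α → ℝ) : Matrix (Fin 1) α ℝ := Matrix.of fun _ j => v j

lemma quad_blk3 {α β γ : Type*} [Fintype α] [Fintype β] [Fintype γ]
    (M11 : Matrix α α ℝ) (M12 : Matrix α β ℝ) (M13 : Matrix α γ ℝ)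
    (M21 : Matrix β α ℝ) (M22 : Matrix β β ℝ) (M23 : Matrix β γ ℝ)
    (M31 : Matrix γ α ℝ) (M32 : Matrix γ β ℝ) (M33 : Matrix γ γ ℝ)
    (x : α → ℝ) (y : β → ℝ) (w : γ → ℝ) :
    (Sum.elim x (Sum.elim y w)) ⬝ᵥ
      ((blk3 M11 M12 M13 M21 M22 M23 M31 M32 M33) *ᵥ (Sum.elim x (Sum.elim y w))) =
    x ⬝ᵥ (M11 *ᵥ x) + x ⬝ᵥ (M12 *ᵥ y) + x ⬝ᵥ (M13 *ᵥ w)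
      + y ⬝ᵥ (M21 *ᵥ x) + y ⬝ᵥ (M22 *ᵥ y) + y ⬝ᵥ (M23 *ᵥ w)
      + w ⬝ᵥ (M31 *ᵥ x) + w ⬝ᵥ (M32 *ᵥ y) + w ⬝ᵥ (M33 *ᵥ w) := by
  simp [blk3, mulVec, dotProduct, Fintype.sum_sum_type, Finset.mul_sum,
    Finset.sum_add_distrib, mul_assoc, mul_add]
  ring

lemma symm_dot {k : ℕ} (M : Matrix (Fin k) (Fin k) ℝ) (h : Mᵀ = M) (a b : Fin k → ℝ) :
    a ⬝ᵥ (M *ᵥ b) = b ⬝ᵥ (M *ᵥ a) := by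
  rw [dotProduct_mulVec, ← h, vecMul_transpose, dotProduct_comm, h]

lemma vecMul_dot {k l : ℕ} (M : Matrix (Fin k) (Fin l) ℝ) (a : Fin k → ℝ) (b : Fin l → ℝ) :
    (a ᵥ* M) ⬝ᵥ b = a ⬝ᵥ (M *ᵥ b) := (dotProduct_mulVec a M b).symm

/-- Pointwise S-procedure consequence in the proof of Lemma 1. -/
theorem s_procedure_pointwise {n m : ℕ}
    (Q A : Matrix (Fin n) (Fin n) ℝ) (B : Matrix (Fin n) (Fin m) ℝ)
    (R : Matrix (Fin m) (Fin m) ℝ) (ubar : Fin m → ℝ)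
    (Ξ : Matrix (Fin n) (Fin n) ℝ) (ξbar : Fin n → ℝ)
    (hQ : Q.PosDef) (hR : R.PosDef) (hΞ : Ξ.PosSemidef)
    (E F S T : Matrix ((Fin n) ⊕ ((Fin 1) ⊕ (Fin m))) ((Fin n) ⊕ ((Fin 1) ⊕ (Fin m))) ℝ)
    (hE : E = blk3 (Aᵀ * Q + Q * A) 0 (Q * B)
                   0 0 0
                   (Bᵀ * Q) 0 0)
    (hF : F = blk3 Q 0 0
                   0 (sc (-1)) 0
                   0 0 0)
    (hS : S = blk3 0 0 0
                   0 (sc (1 - ubar ⬝ᵥ (R *ᵥ ubar))) (rowV (ubar ᵥ* R))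
                   0 (colV (R *ᵥ ubar)) (-R))
    (hT : T = blk3 (-Ξ) (colV (Ξ *ᵥ ξbar)) 0
                   (rowV (ξbar ᵥ* Ξ)) (sc (1 - ξbar ⬝ᵥ (Ξ *ᵥ ξbar))) 0
                   0 0 0)
    (α β lam : ℝ) (hα : 0 ≤ α) (hβ : 0 ≤ β) (hlam : 0 ≤ lam)
    (hLMI : (-E - α • F - β • S - lam • T).PosSemidef) :
    ∀ (ζ : Fin n → ℝ) (u : Fin m → ℝ),
      1 ≤ ζ ⬝ᵥ (Q *ᵥ ζ) →
      (u - ubar) ⬝ᵥ (R *ᵥ (u - ubar)) ≤ 1 →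
      (ζ - ξbar) ⬝ᵥ (Ξ *ᵥ (ζ - ξbar)) ≤ 1 →
      2 * (ζ ⬝ᵥ (Q *ᵥ (A *ᵥ ζ + B *ᵥ u))) ≤ 0 := by
  intro ζ u h1 h2 h3
  have hQs : Qᵀ = Q := hQ.1
  set z : (Fin n ⊕ (Fin 1 ⊕ Fin m)) → ℝ :=
    Sum.elim ζ (Sum.elim (fun _ => (1:ℝ)) u) with hzdef
  -- quadratic forms
  have eE : z ⬝ᵥ (E *ᵥ z) = 2 * (ζ ⬝ᵥ (Q *ᵥ (A *ᵥ ζ + B *ᵥ u))) := by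
    rw [hzdef, hE, quad_blk3]
    have h1' : ζ ⬝ᵥ ((Aᵀ * Q + Q * A) *ᵥ ζ)
        = ζ ⬝ᵥ (Q *ᵥ (A *ᵥ ζ)) + ζ ⬝ᵥ (Q *ᵥ (A *ᵥ ζ)) := by
      rw [add_mulVec, dotProduct_add, ← mulVec_mulVec, ← mulVec_mulVec,
        dotProduct_mulVec ζ Aᵀ, vecMul_transpose]
      rw [symm_dot Q hQs ζ (A *ᵥ ζ), dotProduct_comm]
    have h2' : u ⬝ᵥ ((Bᵀ * Q) *ᵥ ζ) = ζ ⬝ᵥ (Q *ᵥ (B *ᵥ u)) := by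
      rw [← mulVec_mulVec, dotProduct_mulVec u Bᵀ, vecMul_transpose,
        symm_dot Q hQs ζ (B *ᵥ u), dotProduct_comm]
    have h3' : ζ ⬝ᵥ ((Q * B) *ᵥ u) = ζ ⬝ᵥ (Q *ᵥ (B *ᵥ u)) := by
      rw [← mulVec_mulVec]
    simp only [zero_mulVec, dotProduct_zero, mulVec_zero, h1', h2', h3',
      add_zero, zero_add]
    rw [mulVec_add, dotProduct_add]
    ring
  have eF : z ⬝ᵥ (F *ᵥ z) = ζ ⬝ᵥ (Q *ᵥ ζ) - 1 := by
    rw [hzdef, hF, quad_blk3]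
    simp [sc, mulVec, dotProduct]
    ring
  have eS : z ⬝ᵥ (S *ᵥ z) = 1 - (u - ubar) ⬝ᵥ (R *ᵥ (u - ubar)) := by
    rw [hzdef, hS, quad_blk3]
    have hrow : (fun _ : Fin 1 => (1:ℝ)) ⬝ᵥ ((rowV (ubar ᵥ* R)) *ᵥ u)
        = ubar ⬝ᵥ (R *ᵥ u) := by
      rw [← vecMul_dot]
      simp [rowV, vecMul, mulVec, dotProduct, Finset.sum_mul, mul_assoc]
      rw [Finset.sum_comm]
      simp [Finset.mul_sum]
    have hcol : u ⬝ᵥ ((colV (R *ᵥ ubar)) *ᵥ (fun _ : Fin 1 => (1:ℝ)))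
        = u ⬝ᵥ (R *ᵥ ubar) := by
      simp [colV, mulVec, dotProduct]
    have hsc : (fun _ : Fin 1 => (1:ℝ)) ⬝ᵥ ((sc (1 - ubar ⬝ᵥ (R *ᵥ ubar))) *ᵥ
        (fun _ : Fin 1 => (1:ℝ))) = 1 - ubar ⬝ᵥ (R *ᵥ ubar) := by
      simp [sc, mulVec, dotProduct]
    simp only [zero_mulVec, dotProduct_zero, mulVec_zero, add_zero, zero_add,
      hrow, hcol, hsc, neg_mulVec, dotProduct_neg]
    rw [mulVec_sub, dotProduct_sub, sub_dotProduct, sub_dotProduct]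
    ring
  have eT : z ⬝ᵥ (T *ᵥ z) = 1 - (ζ - ξbar) ⬝ᵥ (Ξ *ᵥ (ζ - ξbar)) := by
    rw [hzdef, hT, quad_blk3]
    have hrow : (fun _ : Fin 1 => (1:ℝ)) ⬝ᵥ ((rowV (ξbar ᵥ* Ξ)) *ᵥ ζ)
        = ξbar ⬝ᵥ (Ξ *ᵥ ζ) := by
      rw [← vecMul_dot]
      simp [rowV, vecMul, mulVec, dotProduct, Finset.sum_mul, mul_assoc]
      rw [Finset.sum_comm]
      simp [Finset.mul_sum]
    have hcol : ζ ⬝ᵥ ((colV (Ξ *ᵥ ξbar)) *ᵥ (fun _ : Fin 1 => (1:ℝ)))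
        = ζ ⬝ᵥ (Ξ *ᵥ ξbar) := by
      simp [colV, mulVec, dotProduct]
    have hsc : (fun _ : Fin 1 => (1:ℝ)) ⬝ᵥ ((sc (1 - ξbar ⬝ᵥ (Ξ *ᵥ ξbar))) *ᵥ
        (fun _ : Fin 1 => (1:ℝ))) = 1 - ξbar ⬝ᵥ (Ξ *ᵥ ξbar) := by
      simp [sc, mulVec, dotProduct]
    simp only [zero_mulVec, dotProduct_zero, mulVec_zero, add_zero, zero_add,
      hrow, hcol, hsc, neg_mulVec, dotProduct_neg]
    rw [mulVec_sub, dotProduct_sub, sub_dotProduct, sub_dotProduct]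
    ring
  have hz : (0:ℝ) ≤ z ⬝ᵥ ((-E - α • F - β • S - lam • T) *ᵥ z) := by
    have := hLMI.dotProduct_mulVec_nonneg z
    simpa using this
  have hexp : z ⬝ᵥ ((-E - α • F - β • S - lam • T) *ᵥ z)
      = -(z ⬝ᵥ (E *ᵥ z)) - α * (z ⬝ᵥ (F *ᵥ z)) - β * (z ⬝ᵥ (S *ᵥ z))
        - lam * (z ⬝ᵥ (T *ᵥ z)) := by
    simp only [sub_mulVec, neg_mulVec, smul_mulVec, dotProduct_sub,
      dotProduct_neg, dotProduct_smul, smul_eq_mul]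
  rw [hexp, eE, eF, eS, eT] at hz
  have t1 : 0 ≤ α * (ζ ⬝ᵥ (Q *ᵥ ζ) - 1) := mul_nonneg hα (by linarith)
  have t2 : 0 ≤ β * (1 - (u - ubar) ⬝ᵥ (R *ᵥ (u - ubar))) := mul_nonneg hβ (by linarith)
  have t3 : 0 ≤ lam * (1 - (ζ - ξbar) ⬝ᵥ (Ξ *ᵥ (ζ - ξbar))) := mul_nonneg hlam (by linarith)
  linarith
end

section
/- Let p, m ≥ 1. Let Q = [[Y, N],[Nᵀ, Ỹ]] ∈ ℝ^{2p×2p} be symmetric positive definite with inverse Q⁻¹ = [[X, M],[Mᵀ, X̃]] (all blocks p×p) and M invertible, and set Π₁ = [[X, I_p],[Mᵀ, 0]]. Let A ∈ ℝ^{2p×2p} and B ∈ ℝ^{2p×m} be arbitrary, let R ∈ ℝ^{m×m} be symmetric positive definite with ū ∈ ℝ^m, let Ξ_p ∈ ℝ^{p×p} be symmetric positive definite with ξ̄_p ∈ ℝ^p, and set Ξ = [[Ξ_p, 0],[0, 0]] ∈ ℝ^{2p×2p}, ξ̄ = (ξ̄_p, 0). Define E = [[AᵀQ+QA, 0, QB],[0,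 0, 0],[BᵀQ, 0, 0]], F = [[Q, 0, 0],[0, −1, 0],[0, 0, 0]], S = [[0, 0, 0],[0, 1−ūᵀRū, ūᵀR],[0, Rū, −R]], T = [[−Ξ, Ξξ̄, 0],[ξ̄ᵀΞ, 1−ξ̄ᵀΞξ̄, 0],[0, 0, 0]], and the transformed matrices E′ = [[Π₁ᵀ(AᵀQ+QA)Π₁, 0, Π₁ᵀQB],[0, 0, 0],[BᵀQΠ₁, 0, 0]], F′ = [[Π₁ᵀQΠ₁, 0, 0],[0, −1, 0],[0, 0, 0]], S′ = S, T′ = [[−𝒢, Π₁ᵀΞξ̄, 0],[ξ̄ᵀΞΠ₁, 1−ξ̄ᵀΞξ̄, 0],[0, 0, 0]] with 𝒢 = [[2X − Ξ_p⁻¹, XΞ_p],[Ξ_pX, Ξ_p]]. If α, β, λ ≥ 0 and −E′ − αF′ − βS′ − λT′ ⪰ 0, then −E − αF − βS − λT ⪰ 0. -/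
open Matrix

set_option linter.unusedSectionVars false

section Helpers
variable {α β γ δ : Type*} [Fintype α] [Fintype β] [Fintype γ] [Fintype δ]
  [DecidableEq α] [DecidableEq β] [DecidableEq γ]

/-- row of two blocks -/
def r2 (M12 : Matrix α β ℝ) (M13 : Matrix α γ ℝ) : Matrix α (β ⊕ γ) ℝ :=
  Matrix.of fun i j => Sum.elim (M12 i) (M13 i) j

def c2 (M21 : Matrix β α ℝ) (M31 : Matrix γ α ℝ) : Matrix (β ⊕ γ) α ℝ :=
  Matrix.of fun i j => Sum.elim (fun b => M21 b j) (fun c => M31 c j) i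

lemma mul_r2 (L : Matrix δ α ℝ) (M12 : Matrix α β ℝ) (M13 : Matrix α γ ℝ) :
    L * r2 M12 M13 = r2 (L * M12) (L * M13) := by
  ext i j; cases j <;> simp [r2, Matrix.mul_apply]

lemma c2_mul (M21 : Matrix β α ℝ) (M31 : Matrix γ α ℝ) (R : Matrix α δ ℝ) :
    c2 M21 M31 * R = c2 (M21 * R) (M31 * R) := by
  ext i j; cases i <;> simp [c2, Matrix.mul_apply]

lemma r2_zero : r2 (0 : Matrix α β ℝ) (0 : Matrix α γ ℝ) = 0 := by
  ext i j; cases j <;> simp [r2]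

lemma c2_zero : c2 (0 : Matrix β α ℝ) (0 : Matrix γ α ℝ) = 0 := by
  ext i j; cases i <;> simp [c2]

lemma mul_colV (L : Matrix δ α ℝ) (v : α → ℝ) : L * colV v = colV (L *ᵥ v) := by
  ext i j; simp [colV, Matrix.mul_apply, Matrix.mulVec, dotProduct]

lemma rowV_mul (v : α → ℝ) (R : Matrix α δ ℝ) : rowV v * R = rowV (v ᵥ* R) := by
  ext i j; simp [rowV, Matrix.mul_apply, Matrix.vecMul, dotProduct]

lemma blk3_eq (M11 : Matrix α α ℝ) (M12 : Matrix α β ℝ) (M13 : Matrix α γ ℝ)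
    (M21 : Matrix β α ℝ) (M22 : Matrix β β ℝ) (M23 : Matrix β γ ℝ)
    (M31 : Matrix γ α ℝ) (M32 : Matrix γ β ℝ) (M33 : Matrix γ γ ℝ) :
    blk3 M11 M12 M13 M21 M22 M23 M31 M32 M33 =
      Matrix.fromBlocks M11 (r2 M12 M13) (c2 M21 M31) (Matrix.fromBlocks M22 M23 M32 M33) := rfl

lemma blk3_congr (P : Matrix α α ℝ)
    (M11 : Matrix α α ℝ) (M12 : Matrix α β ℝ) (M13 : Matrix α γ ℝ)
    (M21 : Matrix β α ℝ) (M22 : Matrix β β ℝ) (M23 : Matrix β γ ℝ)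
    (M31 : Matrix γ α ℝ) (M32 : Matrix γ β ℝ) (M33 : Matrix γ γ ℝ) :
    (Matrix.fromBlocks P 0 0 (1 : Matrix (β ⊕ γ) (β ⊕ γ) ℝ))ᵀ *
        blk3 M11 M12 M13 M21 M22 M23 M31 M32 M33 *
        Matrix.fromBlocks P 0 0 (1 : Matrix (β ⊕ γ) (β ⊕ γ) ℝ) =
      blk3 (Pᵀ * M11 * P) (Pᵀ * M12) (Pᵀ * M13) (M21 * P) M22 M23 (M31 * P) M32 M33 := by
  rw [blk3_eq, blk3_eq, Matrix.fromBlocks_transpose, Matrix.fromBlocks_multiply,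
    Matrix.fromBlocks_multiply]
  simp [mul_r2, c2_mul]

lemma blk3_sub (A11 B11 : Matrix α α ℝ) (A12 B12 : Matrix α β ℝ) (A13 B13 : Matrix α γ ℝ)
    (A21 B21 : Matrix β α ℝ) (A22 B22 : Matrix β β ℝ) (A23 B23 : Matrix β γ ℝ)
    (A31 B31 : Matrix γ α ℝ) (A32 B32 : Matrix γ β ℝ) (A33 B33 : Matrix γ γ ℝ) :
    blk3 A11 A12 A13 A21 A22 A23 A31 A32 A33 - blk3 B11 B12 B13 B21 B22 B23 B31 B32 B33 =
      blk3 (A11 - B11) (A12 - B12) (A13 - B13) (A21 - B21) (A22 - B22) (A23 - B23)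
        (A31 - B31) (A32 - B32) (A33 - B33) := by
  ext i j
  rcases i with i | i <;> rcases j with j | j <;>
    [skip; rcases j with j | j; rcases i with i | i;
     (rcases i with i | i <;> rcases j with j | j)] <;>
    simp [blk3, r2, c2, Matrix.fromBlocks]

lemma blk3_zero_corner (D : Matrix α α ℝ) :
    blk3 D 0 0 0 0 0 0 0 (0 : Matrix γ γ ℝ) =
      Matrix.fromBlocks D 0 0 (0 : Matrix (β ⊕ γ) (β ⊕ γ) ℝ) := by
  rw [blk3_eq, r2_zero, c2_zero, Matrix.fromBlocks_zero]

lemma psd_fromBlocks {D : Matrix α α ℝ} (hD : D.PosSemidef) {τ : Type*} [Fintype τ] :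
    (Matrix.fromBlocks D 0 0 (0 : Matrix τ τ ℝ)).PosSemidef := by
  rw [Matrix.posSemidef_iff_dotProduct_mulVec]
  constructor
  · have h : Dᵀ = D := by
      rw [← Matrix.conjTranspose_eq_transpose_of_trivial]; exact hD.isHermitian.eq
    unfold Matrix.IsHermitian
    rw [Matrix.fromBlocks_conjTranspose]
    simp [h]
  · intro x
    have hx : x = Sum.elim (x ∘ Sum.inl) (x ∘ Sum.inr) := funext fun i => by cases i <;> rfl
    rw [hx, Matrix.fromBlocks_mulVec]
    simp only [Matrix.zero_mulVec, add_zero, zero_add, Matrix.mulVec_zero]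
    rw [show (star (Sum.elim (x ∘ Sum.inl) (x ∘ Sum.inr))) = Sum.elim (star (x ∘ Sum.inl)) (star (x ∘ Sum.inr)) from funext fun i => by cases i <;> rfl]
    rw [sumElim_dotProduct_sumElim]
    simpa using hD.dotProduct_mulVec_nonneg (x ∘ Sum.inl)

lemma psd_smul {A : Matrix α α ℝ} (hA : A.PosSemidef) {c : ℝ} (hc : 0 ≤ c) :
    (c • A).PosSemidef := by
  rw [Matrix.posSemidef_iff_dotProduct_mulVec]
  constructor
  · have h : Aᵀ = A := by
      rw [← Matrix.conjTranspose_eq_transpose_of_trivial]; exact hA.isHermitian.eq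
    unfold Matrix.IsHermitian
    rw [Matrix.conjTranspose_smul]
    simp [h]
  · intro x
    rw [Matrix.smul_mulVec]
    simpa using smul_nonneg hc (hA.dotProduct_mulVec_nonneg x)

lemma fromBlocks_sub' (A A' : Matrix α α ℝ) (B B' : Matrix α δ ℝ)
    (C C' : Matrix δ α ℝ) (D D' : Matrix δ δ ℝ) :
    Matrix.fromBlocks A B C D - Matrix.fromBlocks A' B' C' D' =
      Matrix.fromBlocks (A - A') (B - B') (C - C') (D - D') := by
  ext i j; rcases i with i | i <;> rcases j with j | j <;> simp [Matrix.fromBlocks]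

end Helpers

/-- Bridging claim in the proof of Theorem 1: the primed LMI in the linearized variables
implies the original invariance LMI of Lemma 1. -/
theorem primed_LMI_implies_original {p m : ℕ} (hp : 1 ≤ p) (hm : 1 ≤ m)
    (Y N Ytilde X M Xtilde : Matrix (Fin p) (Fin p) ℝ)
    (Q : Matrix ((Fin p) ⊕ (Fin p)) ((Fin p) ⊕ (Fin p)) ℝ)
    (hQ : Q = Matrix.fromBlocks Y N Nᵀ Ytilde)
    (hQpd : Q.PosDef)
    (hQinv : Q⁻¹ = Matrix.fromBlocks X M Mᵀ Xtilde)
    (hM : IsUnit M)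
    (Pi1 : Matrix ((Fin p) ⊕ (Fin p)) ((Fin p) ⊕ (Fin p)) ℝ)
    (hPi1 : Pi1 = Matrix.fromBlocks X 1 Mᵀ 0)
    (A : Matrix ((Fin p) ⊕ (Fin p)) ((Fin p) ⊕ (Fin p)) ℝ)
    (B : Matrix ((Fin p) ⊕ (Fin p)) (Fin m) ℝ)
    (R : Matrix (Fin m) (Fin m) ℝ) (ubar : Fin m → ℝ) (hR : R.PosDef)
    (Ξp : Matrix (Fin p) (Fin p) ℝ) (hΞp : Ξp.PosDef) (ξbarp : Fin p → ℝ)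
    (Ξ : Matrix ((Fin p) ⊕ (Fin p)) ((Fin p) ⊕ (Fin p)) ℝ)
    (hΞ : Ξ = Matrix.fromBlocks Ξp 0 0 0)
    (ξbar : ((Fin p) ⊕ (Fin p)) → ℝ) (hξ : ξbar = Sum.elim ξbarp 0)
    (G : Matrix ((Fin p) ⊕ (Fin p)) ((Fin p) ⊕ (Fin p)) ℝ)
    (hG : G = Matrix.fromBlocks ((2 : ℝ) • X - Ξp⁻¹) (X * Ξp) (Ξp * X) Ξp)
    (E F S T E' F' T' : Matrix (((Fin p) ⊕ (Fin p)) ⊕ ((Fin 1) ⊕ (Fin m)))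
        (((Fin p) ⊕ (Fin p)) ⊕ ((Fin 1) ⊕ (Fin m))) ℝ)
    (hE : E = blk3 (Aᵀ * Q + Q * A) 0 (Q * B)
                   0 0 0
                   (Bᵀ * Q) 0 0)
    (hF : F = blk3 Q 0 0
                   0 (sc (-1)) 0
                   0 0 0)
    (hS : S = blk3 0 0 0
                   0 (sc (1 - ubar ⬝ᵥ (R *ᵥ ubar))) (rowV (ubar ᵥ* R))
                   0 (colV (R *ᵥ ubar)) (-R))
    (hT : T = blk3 (-Ξ) (colV (Ξ *ᵥ ξbar)) 0
                   (rowV (ξbar ᵥ* Ξ)) (sc (1 - ξbar ⬝ᵥ (Ξ *ᵥ ξbar))) 0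
                   0 0 0)
    (hE' : E' = blk3 (Pi1ᵀ * (Aᵀ * Q + Q * A) * Pi1) 0 (Pi1ᵀ * (Q * B))
                     0 0 0
                     (Bᵀ * Q * Pi1) 0 0)
    (hF' : F' = blk3 (Pi1ᵀ * Q * Pi1) 0 0
                     0 (sc (-1)) 0
                     0 0 0)
    (hT' : T' = blk3 (-G) (colV (Pi1ᵀ *ᵥ (Ξ *ᵥ ξbar))) 0
                     (rowV ((ξbar ᵥ* Ξ) ᵥ* Pi1)) (sc (1 - ξbar ⬝ᵥ (Ξ *ᵥ ξbar))) 0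
                     0 0 0)
    (α β lam : ℝ) (hα : 0 ≤ α) (hβ : 0 ≤ β) (hlam : 0 ≤ lam)
    (hLMI' : (-E' - α • F' - β • S - lam • T').PosSemidef) :
    (-E - α • F - β • S - lam • T).PosSemidef := by
  classical
  -- X is symmetric
  have hQT : Qᵀ = Q := by
    rw [← Matrix.conjTranspose_eq_transpose_of_trivial]; exact hQpd.isHermitian.eq
  have hQiT : (Q⁻¹)ᵀ = Q⁻¹ := by rw [Matrix.transpose_nonsing_inv, hQT]
  have hX : Xᵀ = X := by
    have h := hQiT
    rw [hQinv, Matrix.fromBlocks_transpose] at h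
    have h2 := congrArg Matrix.toBlocks₁₁ h
    simpa [Matrix.toBlocks_fromBlocks₁₁] using h2
  -- Ξp inverse facts
  have hdet : IsUnit Ξp.det := isUnit_iff_ne_zero.mpr (ne_of_gt hΞp.det_pos)
  have hXi1 : Ξp * Ξp⁻¹ = 1 := Matrix.mul_nonsing_inv _ hdet
  have hXi2 : Ξp⁻¹ * Ξp = 1 := Matrix.nonsing_inv_mul _ hdet
  have hΞpT : Ξpᵀ = Ξp := by
    rw [← Matrix.conjTranspose_eq_transpose_of_trivial]; exact hΞp.isHermitian.eq
  have hΞpiT : (Ξp⁻¹)ᵀ = Ξp⁻¹ := by rw [Matrix.transpose_nonsing_inv, hΞpT]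
  -- the congruence matrix
  set W : Matrix (((Fin p) ⊕ (Fin p)) ⊕ ((Fin 1) ⊕ (Fin m)))
      (((Fin p) ⊕ (Fin p)) ⊕ ((Fin 1) ⊕ (Fin m))) ℝ :=
    Matrix.fromBlocks Pi1 0 0 1 with hW
  -- the slack term
  set Δ : Matrix (((Fin p) ⊕ (Fin p)) ⊕ ((Fin 1) ⊕ (Fin m)))
      (((Fin p) ⊕ (Fin p)) ⊕ ((Fin 1) ⊕ (Fin m))) ℝ :=
    blk3 (Pi1ᵀ * Ξ * Pi1 - G) 0 0 0 0 0 0 0 0 with hΔdef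
  -- computation of Pi1ᵀ Ξ Pi1
  have hPiXi : Pi1ᵀ * Ξ * Pi1 = Matrix.fromBlocks (X * Ξp * X) (X * Ξp) (Ξp * X) Ξp := by
    rw [hPi1, hΞ, Matrix.fromBlocks_transpose, Matrix.fromBlocks_multiply,
      Matrix.fromBlocks_multiply]
    simp [hX]
  -- the Schur-like slack is PSD
  have hCps : (X * Ξp * X - ((2 : ℝ) • X - Ξp⁻¹)).PosSemidef := by
    have e1 : (X - Ξp⁻¹) * Ξp * (X - Ξp⁻¹) = X * Ξp * X - X - X + Ξp⁻¹ := by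
      rw [Matrix.sub_mul, hXi2, Matrix.sub_mul, Matrix.mul_sub,
        Matrix.mul_assoc X Ξp Ξp⁻¹, hXi1, Matrix.mul_one, Matrix.one_mul]
      abel
    have e2 : X * Ξp * X - ((2 : ℝ) • X - Ξp⁻¹) = (X - Ξp⁻¹)ᴴ * Ξp * (X - Ξp⁻¹) := by
      rw [Matrix.conjTranspose_eq_transpose_of_trivial, Matrix.transpose_sub, hX, hΞpiT, e1,
        two_smul]
      abel
    rw [e2]
    exact hΞp.posSemidef.conjTranspose_mul_mul_same (X - Ξp⁻¹)
  have hDps : (Pi1ᵀ * Ξ * Pi1 - G).PosSemidef := by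
    have hblock : Pi1ᵀ * Ξ * Pi1 - G =
        Matrix.fromBlocks (X * Ξp * X - ((2 : ℝ) • X - Ξp⁻¹)) 0 0 0 := by
      rw [hPiXi, hG, fromBlocks_sub']
      simp
    rw [hblock]
    exact psd_fromBlocks hCps
  have hΔps : Δ.PosSemidef := by
    rw [hΔdef, blk3_zero_corner]
    exact psd_fromBlocks hDps
  -- congruence identities
  have hE2 : Wᵀ * E * W = E' := by
    rw [hW, hE, hE', blk3_congr]
    simp [Matrix.mul_assoc]
  have hF2 : Wᵀ * F * W = F' := by
    rw [hW, hF, hF', blk3_congr]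
    simp
  have hS2 : Wᵀ * S * W = S := by
    rw [hW, hS, blk3_congr]
    simp
  have hT2 : Wᵀ * T * W = T' - Δ := by
    rw [hW, hT, blk3_congr, hT', hΔdef, blk3_sub]
    have harg : -G - (Pi1ᵀ * Ξ * Pi1 - G) = -(Pi1ᵀ * Ξ * Pi1) := by abel
    simp only [mul_colV, rowV_mul, Matrix.mul_neg, Matrix.neg_mul, Matrix.mul_zero,
      Matrix.zero_mul, sub_zero, harg]
  -- key identity
  have hkey : Wᵀ * (-E - α • F - β • S - lam • T) * W =
      (-E' - α • F' - β • S - lam • T') + lam • Δ := by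
    simp only [Matrix.mul_sub, Matrix.sub_mul, Matrix.mul_neg, Matrix.neg_mul,
      Matrix.mul_smul, Matrix.smul_mul]
    rw [hE2, hF2, hS2, hT2, smul_sub]
    abel
  have hWMW : (Wᵀ * (-E - α • F - β • S - lam • T) * W).PosSemidef := by
    rw [hkey]
    exact hLMI'.add (psd_smul hΔps hlam)
  -- invertibility of W
  have hdetMT : IsUnit Mᵀ.det := by
    rw [Matrix.det_transpose]
    exact (Matrix.isUnit_iff_isUnit_det M).mp hM
  have hMT1 : Mᵀ * (Mᵀ)⁻¹ = 1 := Matrix.mul_nonsing_inv _ hdetMT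
  set P2 : Matrix ((Fin p) ⊕ (Fin p)) ((Fin p) ⊕ (Fin p)) ℝ :=
    Matrix.fromBlocks 0 (Mᵀ)⁻¹ 1 (-(X * (Mᵀ)⁻¹)) with hP2def
  have hP2 : Pi1 * P2 = 1 := by
    rw [hPi1, hP2def, Matrix.fromBlocks_multiply]
    rw [show X * 0 + 1 * (1 : Matrix (Fin p) (Fin p) ℝ) = 1 by simp,
      show X * (Mᵀ)⁻¹ + 1 * -(X * (Mᵀ)⁻¹) = 0 by simp,
      show Mᵀ * 0 + 0 * (1 : Matrix (Fin p) (Fin p) ℝ) = 0 by simp,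
      show Mᵀ * (Mᵀ)⁻¹ + 0 * -(X * (Mᵀ)⁻¹) = 1 by simp [hMT1]]
    exact Matrix.fromBlocks_one
  set W2 : Matrix (((Fin p) ⊕ (Fin p)) ⊕ ((Fin 1) ⊕ (Fin m)))
      (((Fin p) ⊕ (Fin p)) ⊕ ((Fin 1) ⊕ (Fin m))) ℝ :=
    Matrix.fromBlocks P2 0 0 1 with hW2
  have hWW2 : W * W2 = 1 := by
    rw [hW, hW2, Matrix.fromBlocks_multiply]
    simp [hP2, Matrix.fromBlocks_one]
  have hfinal : (-E - α • F - β • S - lam • T) =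
      W2ᵀ * (Wᵀ * (-E - α • F - β • S - lam • T) * W) * W2 := by
    have h : W2ᵀ * (Wᵀ * (-E - α • F - β • S - lam • T) * W) * W2 =
        (W * W2)ᵀ * (-E - α • F - β • S - lam • T) * (W * W2) := by
      rw [Matrix.transpose_mul]
      simp [Matrix.mul_assoc]
    rw [h, hWW2]
    simp
  rw [hfinal]
  have h := hWMW.conjTranspose_mul_mul_same W2
  rwa [Matrix.conjTranspose_eq_transpose_of_trivial] at h
end
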